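/- For y > 0 and an integer k ≥ 2, the integral over ℝ of (x+iy)^{−k} · exp(−2iπx) dx equals exp(−2πy) · (−i)^k · (2π)^k / Γ(k) · (so that it equals exp(−2πy) · (−2πi)^k · y^0 / (k−1)!), i.e. ∫_ℝ (x+iy)^{−k} e^{−2iπx} dx = (−2πi)^k e^{−2πy} / (k−1)!. -/

import Mathlib

open MeasureTheory Complex Real Set Filter

-- tendsto of t^n * exp(-b t)
lemma auxT (b : ℝ) (hb : 0 < b) (n : ℕ) :
    Tendsto (fun t : ℝ => t ^ n * Real.exp (-b * t)) atTop (nhds 0) := by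
  have := tendsto_rpow_mul_exp_neg_mul_atTop_nhds_zero n b hb
  refine this.congr' ?_
  filter_upwards [eventually_gt_atTop (0:ℝ)] with x hx
  rw [Real.rpow_natCast]

lemma auxRealInt (b : ℝ) (hb : 0 < b) (n : ℕ) :
    IntegrableOn (fun t : ℝ => t ^ n * Real.exp (-(b * t))) (Set.Ioi 0) := by
  apply integrable_of_isBigO_exp_neg (b := b / 2) (by linarith)
    (Continuous.continuousOn (by continuity))
  rw [Asymptotics.isBigO_iff]
  refine ⟨1, ?_⟩
  have h0 := auxT (b / 2) (by linarith) n
  have h1 : ∀ᶠ x : ℝ in atTop, x ^ n * Real.exp (-(b/2) * x) ≤ 1 :=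
    h0.eventually (eventually_le_nhds one_pos)
  filter_upwards [h1, eventually_ge_atTop (0:ℝ)] with x hx hx0
  have he : Real.exp (-(b * x)) = Real.exp (-(b/2) * x) * Real.exp (-(b/2) * x) := by
    rw [← Real.exp_add]; ring_nf
  rw [Real.norm_of_nonneg (by positivity), Real.norm_of_nonneg (Real.exp_pos _).le, he,
    ← mul_assoc, one_mul]
  exact mul_le_of_le_one_left (Real.exp_pos _).le hx

lemma auxInt (c : ℂ) (hc : 0 < c.re) (n : ℕ) :
    IntegrableOn (fun t : ℝ => (t : ℂ) ^ n * Complex.exp (-(c * t))) (Set.Ioi 0) := by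
  refine (auxRealInt c.re hc n).mono' (Continuous.aestronglyMeasurable (by continuity)).restrict ?_
  filter_upwards [ae_restrict_mem measurableSet_Ioi] with t ht
  rw [mem_Ioi] at ht
  rw [norm_mul, Complex.norm_exp]
  simp only [norm_pow, Complex.norm_real, Real.norm_eq_abs, abs_of_pos ht]
  have : (-(c * t)).re = -(c.re * t) := by simp
  rw [this]

lemma auxDerivCoe (t : ℝ) : HasDerivAt (fun t : ℝ => (t:ℂ)) 1 t := by
  simpa using (hasDerivAt_id t).ofReal_comp

lemma auxNormExp (c : ℂ) (t : ℝ) (ht : 0 < t) (n : ℕ) :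
    ‖(t:ℂ) ^ n * Complex.exp (-(c * t))‖ = t ^ n * Real.exp (-c.re * t) := by
  rw [norm_mul, Complex.norm_exp]
  simp [abs_of_pos ht, Complex.mul_re, neg_mul]

lemma auxExpTendsto (c : ℂ) (hc : 0 < c.re) (n : ℕ) :
    Tendsto (fun t : ℝ => (t:ℂ) ^ n * Complex.exp (-(c * t))) atTop (nhds 0) := by
  rw [tendsto_zero_iff_norm_tendsto_zero]
  refine (auxT c.re hc n).congr' ?_
  filter_upwards [eventually_gt_atTop (0:ℝ)] with t ht
  rw [auxNormExp c t ht n]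

lemma auxDerivExp (c : ℂ) (t : ℝ) :
    HasDerivAt (fun t : ℝ => Complex.exp (-(c * t))) (-c * Complex.exp (-(c * t))) t := by
  have h1 : HasDerivAt (fun t : ℝ => -(c * (t:ℂ))) (-c) t := by
    have h := ((auxDerivCoe t).const_mul c).neg
    simp only [mul_one] at h
    exact h
  simpa [mul_comm] using h1.cexp

lemma auxDerivPow (c : ℂ) (n : ℕ) (t : ℝ) :
    HasDerivAt (fun t : ℝ => (t:ℂ) ^ (n + 1) * Complex.exp (-(c * t)))
      (((n : ℂ) + 1) * ((t:ℂ) ^ n * Complex.exp (-(c * t)))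
        - c * ((t:ℂ) ^ (n + 1) * Complex.exp (-(c * t)))) t := by
  have h1 : HasDerivAt (fun t : ℝ => (t:ℂ) ^ (n + 1)) (((n : ℂ) + 1) * (t:ℂ) ^ n) t := by
    have := (hasDerivAt_pow (n + 1) ((t:ℂ))).comp t (auxDerivCoe t)
    simp [Nat.add_sub_cancel, Nat.cast_add, Nat.cast_one] at this
    exact this
  have := h1.mul (auxDerivExp c t)
  exact this.congr_deriv (by ring)

lemma auxJ0 (c : ℂ) (hc : 0 < c.re) :
    ∫ t : ℝ in Ioi 0, Complex.exp (-(c * t)) = 1 / c := by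
  have hc0 : c ≠ 0 := fun h => by simp [h] at hc
  have key := integral_Ioi_of_hasDerivAt_of_tendsto
    (f := fun t : ℝ => -Complex.exp (-(c * t)) / c)
    (f' := fun t : ℝ => Complex.exp (-(c * t))) (a := 0) (m := 0)
    (Continuous.continuousWithinAt (by continuity))
    (fun x _ => by simpa [neg_div, div_eq_mul_inv, mul_comm, mul_assoc, hc0]
      using ((auxDerivExp c x).neg.div_const c))
    (by simpa using auxInt c hc 0)
    (by simpa using ((auxExpTendsto c hc 0).neg.div_const c))
  rw [key]
  simp [neg_div]

lemma auxJ (c : ℂ) (hc : 0 < c.re) (n : ℕ) :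
    ∫ t : ℝ in Ioi 0, (t:ℂ) ^ n * Complex.exp (-(c * t)) = (n.factorial : ℂ) / c ^ (n + 1) := by
  have hc0 : c ≠ 0 := fun h => by simp [h] at hc
  induction n with
  | zero => simpa using auxJ0 c hc
  | succ n ih =>
    have key := integral_Ioi_of_hasDerivAt_of_tendsto
      (f := fun t : ℝ => (t:ℂ) ^ (n + 1) * Complex.exp (-(c * t)))
      (f' := fun t : ℝ => ((n : ℂ) + 1) * ((t:ℂ) ^ n * Complex.exp (-(c * t)))
        - c * ((t:ℂ) ^ (n + 1) * Complex.exp (-(c * t)))) (a := 0) (m := 0)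
      (Continuous.continuousWithinAt (by continuity))
      (fun x _ => auxDerivPow c n x)
      (((auxInt c hc n).const_mul _).sub ((auxInt c hc (n+1)).const_mul _))
      (by simpa using auxExpTendsto c hc (n+1))
    rw [integral_sub ((auxInt c hc n).const_mul _) ((auxInt c hc (n+1)).const_mul _),
      integral_const_mul, integral_const_mul] at key
    have ih' : c ^ (n + 1) * ∫ t : ℝ in Ioi 0, (t:ℂ) ^ n * Complex.exp (-(c * t))
        = (n.factorial : ℂ) := by
      rw [ih]; field_simp
    have hfac : ((n+1).factorial : ℂ) = ((n:ℂ) + 1) * (n.factorial : ℂ) := by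
      push_cast [Nat.factorial_succ]; ring
    simp only [Complex.ofReal_zero, zero_pow (Nat.succ_ne_zero n), zero_mul, sub_zero] at key
    rw [eq_div_iff (pow_ne_zero _ hc0), hfac]
    linear_combination ((n:ℂ) + 1) * ih' - c ^ (n + 1) * key

open FourierTransform

noncomputable def auxg (y : ℝ) (k : ℕ) : ℝ → ℂ :=
  Set.indicator (Ioi 0) (fun t : ℝ => (t:ℂ) ^ (k - 1) * Complex.exp (-(2 * (π:ℂ) * y * t)))

lemma auxgInt (y : ℝ) (hy : 0 < y) (k : ℕ) : Integrable (auxg y k) := by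
  rw [auxg, integrable_indicator_iff measurableSet_Ioi]
  have := auxInt (2 * (π:ℂ) * y) (by simp [Real.pi_pos.le]; positivity) (k - 1)
  simpa [mul_assoc] using this

lemma auxgCont (y : ℝ) (k : ℕ) : ContinuousAt (auxg y k) 1 := by
  have hev : auxg y k =ᶠ[nhds 1]
      fun t : ℝ => (t:ℂ) ^ (k - 1) * Complex.exp (-(2 * (π:ℂ) * y * t)) := by
    filter_upwards [Ioi_mem_nhds (one_pos : (0:ℝ) < 1)] with t ht
    exact Set.indicator_of_mem ht _
  exact (Continuous.continuousAt (by continuity)).congr hev.symm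

lemma auxFT (y : ℝ) (hy : 0 < y) (k : ℕ) (hk : 2 ≤ k) (w : ℝ) :
    𝓕 (auxg y k) w
      = ((k-1).factorial : ℂ) / ((2 * (π:ℂ)) ^ k * ((y:ℂ) + w * Complex.I) ^ k) := by
  have hc : 0 < (2 * (π:ℂ) * ((y:ℂ) + w * Complex.I)).re := by
    simp [Complex.mul_re, Complex.add_re]
    positivity
  rw [Real.fourier_real_eq_integral_exp_smul]
  have hpt : ∀ v : ℝ, Complex.exp (((-2 * π * v * w : ℝ) : ℂ) * Complex.I) • auxg y k v
      = Set.indicator (Ioi 0) (fun v : ℝ =>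
          (v:ℂ) ^ (k-1) * Complex.exp (-(2 * (π:ℂ) * ((y:ℂ) + w * Complex.I) * v))) v := by
    intro v
    rw [smul_eq_mul, auxg]
    by_cases hv : v ∈ Ioi 0
    · rw [Set.indicator_of_mem hv, Set.indicator_of_mem hv, mul_left_comm, ← Complex.exp_add]
      congr 2
      push_cast
      ring
    · rw [Set.indicator_of_notMem hv, Set.indicator_of_notMem hv, mul_zero]
  simp_rw [hpt]
  rw [integral_indicator measurableSet_Ioi, auxJ _ hc (k - 1),
    Nat.sub_add_cancel (le_trans one_le_two hk), mul_pow]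

lemma auxZ (y : ℝ) (hy : 0 < y) (w : ℝ) : ((y:ℂ) + w * Complex.I) ≠ 0 := by
  intro h
  have := congrArg Complex.re h
  simp at this
  exact hy.ne' this

lemma auxBound (y : ℝ) (hy : 0 < y) (k : ℕ) (hk : 2 ≤ k) (w : ℝ) :
    y ^ (k - 2) * min (y ^ 2) 1 * (1 + w ^ 2)
      ≤ ‖(y:ℂ) + w * Complex.I‖ ^ k := by
  set r := ‖(y:ℂ) + w * Complex.I‖ with hr
  have h1 : y ≤ r := by
    have := Complex.abs_re_le_norm ((y:ℂ) + w * Complex.I)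
    simpa [abs_of_pos hy] using this
  have h2 : r ^ 2 = y ^ 2 + w ^ 2 := by
    rw [hr, Complex.sq_norm]
    simp [Complex.normSq_apply, sq]
  have h3 : y ^ (k - 2) ≤ r ^ (k - 2) := pow_le_pow_left₀ hy.le h1 _
  have h4 : min (y ^ 2) 1 * (1 + w ^ 2) ≤ r ^ 2 := by
    rw [h2]
    nlinarith [min_le_left (y ^ 2) 1, min_le_right (y ^ 2) 1, sq_nonneg w,
      lt_min (pow_pos hy 2) one_pos]
  calc y ^ (k - 2) * min (y ^ 2) 1 * (1 + w ^ 2)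
      = y ^ (k - 2) * (min (y ^ 2) 1 * (1 + w ^ 2)) := by ring
    _ ≤ r ^ (k - 2) * r ^ 2 := by
        apply mul_le_mul h3 h4 (by positivity) (by positivity)
    _ = r ^ k := by rw [← pow_add]; congr 1; omega

lemma auxFTInt (y : ℝ) (hy : 0 < y) (k : ℕ) (hk : 2 ≤ k) :
    Integrable (𝓕 (auxg y k)) := by
  have hFT : 𝓕 (auxg y k) = fun w : ℝ =>
      ((k-1).factorial : ℂ) / ((2 * (π:ℂ)) ^ k * ((y:ℂ) + w * Complex.I) ^ k) :=
    funext (auxFT y hy k hk)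
  rw [hFT]
  set A : ℝ := ((k-1).factorial : ℝ) / (2 * π) ^ k * (y ^ (k - 2) * min (y ^ 2) 1)⁻¹ with hA
  have hm : 0 < y ^ (k - 2) * min (y ^ 2) 1 := by positivity
  refine (integrable_inv_one_add_sq.const_mul A).mono'
    (Continuous.aestronglyMeasurable ?_) (Filter.Eventually.of_forall fun w => ?_)
  · exact continuous_const.div
      (by continuity)
      (fun w => mul_ne_zero (pow_ne_zero _ (by simp [Real.pi_ne_zero])) (pow_ne_zero _ (auxZ y hy w)))
  · have hw : 0 < 1 + w ^ 2 := by positivity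
    have hrpos : 0 < ‖(y:ℂ) + w * Complex.I‖ := by
      simpa [norm_pos_iff] using auxZ y hy w
    rw [norm_div, norm_mul, norm_pow, norm_pow]
    simp only [Complex.norm_natCast]
    have h2pi : ‖(2 * (π:ℂ))‖ = 2 * π := by
      rw [show (2 * (π:ℂ)) = ((2 * π : ℝ) : ℂ) by push_cast; ring, Complex.norm_real, Real.norm_eq_abs,
        abs_of_pos (by positivity)]
    rw [h2pi]
    have h5 : (‖(y:ℂ) + w * Complex.I‖ ^ k)⁻¹
        ≤ (y ^ (k - 2) * min (y ^ 2) 1 * (1 + w ^ 2))⁻¹ := by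
      apply inv_anti₀ (by positivity) (auxBound y hy k hk w)
    calc ((k-1).factorial : ℝ) / ((2 * π) ^ k * ‖(y:ℂ) + w * Complex.I‖ ^ k)
        = ((k-1).factorial : ℝ) / (2 * π) ^ k
            * (‖(y:ℂ) + w * Complex.I‖ ^ k)⁻¹ := by
          rw [div_mul_eq_div_div, div_eq_mul_inv]
      _ ≤ ((k-1).factorial : ℝ) / (2 * π) ^ k
            * (y ^ (k - 2) * min (y ^ 2) 1 * (1 + w ^ 2))⁻¹ := by
          apply mul_le_mul_of_nonneg_left h5 (by positivity)
      _ = A * (1 + w ^ 2)⁻¹ := by rw [hA, mul_inv]; ring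

lemma auxInv (y : ℝ) (hy : 0 < y) (k : ℕ) (hk : 2 ≤ k) :
    ∫ w : ℝ, Complex.exp (2 * (π:ℂ) * w * Complex.I)
        * (((k-1).factorial : ℂ) / ((2 * (π:ℂ)) ^ k * ((y:ℂ) + w * Complex.I) ^ k))
      = Complex.exp (-(2 * (π:ℂ) * y)) := by
  have h1 := MeasureTheory.Integrable.fourierInv_fourier_eq (auxgInt y hy k) (auxFTInt y hy k hk) (auxgCont y k)
  rw [fourierInv_eq_fourier_neg,
    Real.fourier_real_eq_integral_exp_smul] at h1
  have hg1 : auxg y k 1 = Complex.exp (-(2 * (π:ℂ) * y)) := by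
    rw [auxg, Set.indicator_of_mem (mem_Ioi.mpr one_pos)]
    simp
  rw [hg1] at h1
  rw [← h1]
  apply integral_congr_ae
  filter_upwards with w
  rw [auxFT y hy k hk w, smul_eq_mul]
  congr 2
  push_cast
  ring

/-- For `y > 0` and `k ≥ 2`,
`∫_ℝ (x+iy)^{-k} e^{-2iπx} dx = (-2πi)^k e^{-2πy} / (k-1)!`. -/
theorem stmt3 (y : ℝ) (hy : 0 < y) (k : ℕ) (hk : 2 ≤ k) :
    ∫ x : ℝ, ((x : ℂ) + Complex.I * y) ^ (-(k : ℤ))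
        * Complex.exp (-2 * (π : ℂ) * Complex.I * x)
    = (-2 * (π : ℂ) * Complex.I) ^ k * Complex.exp (-2 * (π : ℂ) * y)
        / ((k - 1).factorial : ℂ) := by
  have hNc : ((k - 1).factorial : ℂ) ≠ 0 := Nat.cast_ne_zero.mpr (Nat.factorial_ne_zero _)
  have h2πk : ((2 * (π:ℂ)) ^ k) ≠ 0 := pow_ne_zero _ (by simp [Real.pi_ne_zero])
  -- rewrite the inversion identity
  have hK := auxInv y hy k hk
  have hsplit : ∀ w : ℝ, Complex.exp (2 * (π:ℂ) * w * Complex.I)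
      * (((k-1).factorial : ℂ) / ((2 * (π:ℂ)) ^ k * ((y:ℂ) + w * Complex.I) ^ k))
      = (((k-1).factorial : ℂ) / (2 * (π:ℂ)) ^ k)
        * ((((y:ℂ) + w * Complex.I) ^ k)⁻¹ * Complex.exp (2 * (π:ℂ) * w * Complex.I)) := by
    intro w
    rw [div_mul_eq_div_div, div_eq_mul_inv]
    ring
  simp_rw [hsplit] at hK
  rw [MeasureTheory.integral_const_mul] at hK
  -- transform LHS by x ↦ -x
  have hneg := MeasureTheory.integral_neg_eq_self
    (f := fun x : ℝ => ((x : ℂ) + Complex.I * y) ^ (-(k : ℤ))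
      * Complex.exp (-2 * (π : ℂ) * Complex.I * x)) (μ := volume)
  rw [← hneg]
  have hpt : ∀ x : ℝ, (((-x : ℝ) : ℂ) + Complex.I * y) ^ (-(k : ℤ))
      * Complex.exp (-2 * (π : ℂ) * Complex.I * ((-x : ℝ) : ℂ))
      = Complex.I ^ (-(k : ℤ))
        * ((((y:ℂ) + x * Complex.I) ^ k)⁻¹ * Complex.exp (2 * (π:ℂ) * x * Complex.I)) := by
    intro x
    have hz : ((-x : ℝ) : ℂ) + Complex.I * y = Complex.I * ((y:ℂ) + x * Complex.I) := by
      push_cast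
      ring_nf
      rw [Complex.I_sq]
      ring
    rw [hz, mul_zpow, zpow_neg ((y:ℂ) + x * Complex.I), zpow_natCast]
    have he : Complex.exp (-2 * (π : ℂ) * Complex.I * ((-x : ℝ) : ℂ))
        = Complex.exp (2 * (π:ℂ) * x * Complex.I) := by
      congr 1
      push_cast
      ring
    rw [he, mul_assoc]
  have e1 : (∫ x : ℝ, ((((-x) : ℝ) : ℂ) + Complex.I * y) ^ (-(k : ℤ))
      * Complex.exp (-2 * (π : ℂ) * Complex.I * ((-x : ℝ) : ℂ)))
      = ∫ x : ℝ, Complex.I ^ (-(k : ℤ))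
        * ((((y:ℂ) + x * Complex.I) ^ k)⁻¹ * Complex.exp (2 * (π:ℂ) * x * Complex.I)) :=
    integral_congr_ae (Filter.Eventually.of_forall hpt)
  rw [e1, MeasureTheory.integral_const_mul]
  -- final algebra
  have hI : (-2 * (π:ℂ) * Complex.I) ^ k = (2 * (π:ℂ)) ^ k * Complex.I ^ (-(k : ℤ)) := by
    rw [zpow_neg, zpow_natCast, ← inv_pow, Complex.inv_I, ← mul_pow]
    congr 1
    ring
  have hE : Complex.exp (-(2 * (π:ℂ) * y)) = Complex.exp (-2 * (π:ℂ) * y) := by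
    congr 1
    ring
  rw [div_mul_eq_mul_div, div_eq_iff h2πk, hE] at hK
  rw [eq_div_iff hNc, hI]
  linear_combination Complex.I ^ (-(k : ℤ)) * hK
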